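/- For all natural numbers n and m, ∫_{−1}^{1} L_n(x)·L_m(x) dx equals 2/(2n+1) if n = m and equals 0 if n ≠ m. -/

import Mathlib

open Polynomial intervalIntegral

/-- the polynomial `(X^2-1)^n` -/
noncomputable def PP (n : ℕ) : ℝ[X] := (X ^ 2 - 1) ^ n

lemma eval_PP (n : ℕ) (y : ℝ) : (PP n).eval y = (y ^ 2 - 1) ^ n := by
  simp [PP]

lemma iteratedDeriv_eval (k : ℕ) (p : ℝ[X]) (x : ℝ) :
    iteratedDeriv k (fun y => p.eval y) x = (derivative^[k] p).eval x := by
  induction k generalizing p x with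
  | zero => simp
  | succ k ih =>
    rw [iteratedDeriv_succ', Function.iterate_succ_apply]
    have : deriv (fun y => p.eval y) = fun y => (derivative p).eval y := by
      funext y; exact (p.hasDerivAt y).deriv
    rw [this, ih]

lemma natDegree_PP (n : ℕ) : (PP n).natDegree = 2 * n := by
  have h : ((X : ℝ[X]) ^ 2 - 1).natDegree = 2 := by
    simpa using (natDegree_X_pow_sub_C (n := 2) (r := (1 : ℝ)))
  rw [PP, natDegree_pow, h, mul_comm]

lemma monic_PP (n : ℕ) : (PP n).Monic :=
  ((by simpa using monic_X_pow_sub_C (1 : ℝ) (two_ne_zero)) : ((X : ℝ[X]) ^ 2 - 1).Monic).pow n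

/-- the iterated derivatives of `(X^2-1)^n` keep a factor `(X^2-1)^(n-k)`. -/
lemma dvd_iter (n k : ℕ) (hk : k ≤ n) :
    ∃ q : ℝ[X], derivative^[k] (PP n) = (X ^ 2 - 1) ^ (n - k) * q := by
  induction k with
  | zero => exact ⟨1, by simp [PP]⟩
  | succ k ih =>
    obtain ⟨q, hq⟩ := ih (le_of_lt (Nat.lt_of_succ_le hk))
    obtain ⟨e, he⟩ : ∃ e, n - k = e + 1 := ⟨n - k - 1, by omega⟩
    refine ⟨C (((e+1 : ℕ)) : ℝ) * derivative ((X:ℝ[X]) ^ 2 - 1) * q + (X ^ 2 - 1) * derivative q, ?_⟩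
    rw [Function.iterate_succ_apply', hq, he, derivative_mul, derivative_pow]
    have h3 : n - (k + 1) = e := by omega
    rw [h3, Nat.add_sub_cancel]
    ring

lemma eval_iter_deriv_zero (n k : ℕ) (hk : k < n) {x : ℝ} (hx : x ^ 2 - 1 = 0) :
    (derivative^[k] (PP n)).eval x = 0 := by
  obtain ⟨q, hq⟩ := dvd_iter n k hk.le
  rw [hq]
  have : n - k ≠ 0 := by omega
  simp [hx, zero_pow this]

/-- integration by parts for polynomials on `[-1,1]` -/
lemma poly_ibp (p q : ℝ[X]) :
    ∫ x in (-1:ℝ)..1, p.eval x * (derivative q).eval x =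
      p.eval 1 * q.eval 1 - p.eval (-1) * q.eval (-1) -
        ∫ x in (-1:ℝ)..1, (derivative p).eval x * q.eval x :=
  integral_mul_deriv_eq_deriv_mul (fun x _ => p.hasDerivAt x) (fun x _ => q.hasDerivAt x)
    ((derivative p).continuous.intervalIntegrable _ _)
    ((derivative q).continuous.intervalIntegrable _ _)

/-- moving derivatives across the inner product -/
lemma key (n m j : ℕ) (hj : j ≤ m) :
    ∫ x in (-1:ℝ)..1, (derivative^[n + j] (PP n)).eval x * (derivative^[m - j] (PP m)).eval x =
      (-1 : ℝ) ^ j *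
        ∫ x in (-1:ℝ)..1, (derivative^[n] (PP n)).eval x * (derivative^[m] (PP m)).eval x := by
  induction j with
  | zero => simp
  | succ j ih =>
    have hj' : j ≤ m := by omega
    have h1 : n + (j + 1) = (n + j) + 1 := by ring
    have h2 : m - j = (m - (j + 1)) + 1 := by omega
    have hlt : m - (j + 1) < m := by omega
    have := poly_ibp (derivative^[m - (j+1)] (PP m)) (derivative^[n + j] (PP n))
    have hz1 : (derivative^[m - (j+1)] (PP m)).eval 1 = 0 :=
      eval_iter_deriv_zero m _ hlt (by norm_num)
    have hz2 : (derivative^[m - (j+1)] (PP m)).eval (-1) = 0 :=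
      eval_iter_deriv_zero m _ hlt (by norm_num)
    rw [hz1, hz2, zero_mul, zero_mul, sub_zero, zero_sub] at this
    have hcomm : ∀ x : ℝ, (derivative^[n + (j+1)] (PP n)).eval x *
        (derivative^[m - (j+1)] (PP m)).eval x =
        (derivative^[m - (j+1)] (PP m)).eval x *
          (derivative (derivative^[n + j] (PP n))).eval x := by
      intro x
      rw [h1, Function.iterate_succ_apply' derivative (n+j) (PP n)]
      ring
    calc ∫ x in (-1:ℝ)..1, (derivative^[n + (j+1)] (PP n)).eval x *
            (derivative^[m - (j+1)] (PP m)).eval x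
        = ∫ x in (-1:ℝ)..1, (derivative^[m - (j+1)] (PP m)).eval x *
            (derivative (derivative^[n + j] (PP n))).eval x := by
          exact intervalIntegral.integral_congr (fun x _ => hcomm x)
      _ = - ∫ x in (-1:ℝ)..1,
            (derivative (derivative^[m - (j+1)] (PP m))).eval x *
              (derivative^[n + j] (PP n)).eval x := this
      _ = - ∫ x in (-1:ℝ)..1, (derivative^[n + j] (PP n)).eval x *
            (derivative^[m - j] (PP m)).eval x := by
          rw [h2, ← Function.iterate_succ_apply' derivative (m - (j+1)) (PP m)]
          congr 1
          exact intervalIntegral.integral_congr (fun x _ => mul_comm _ _)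
      _ = (-1:ℝ) ^ (j+1) * ∫ x in (-1:ℝ)..1,
            (derivative^[n] (PP n)).eval x * (derivative^[m] (PP m)).eval x := by
          rw [ih hj']; ring

/-- value of `∫_{-1}^1 (x^2-1)^n dx` -/
lemma J_val (n : ℕ) : ∫ x in (-1:ℝ)..1, ((x:ℝ) ^ 2 - 1) ^ n =
    (-1:ℝ) ^ n * 2 ^ (2 * n + 1) * (n.factorial : ℝ) ^ 2 / ((2 * n + 1).factorial : ℝ) := by
  induction n with
  | zero => norm_num
  | succ n ih =>
    -- integration by parts : u = (x^2-1)^(n+1), v = x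
    have hab := poly_ibp (PP (n+1)) X
    rw [derivative_X] at hab
    have hz1 : (PP (n+1)).eval 1 = 0 := by simp [eval_PP]
    have hz2 : (PP (n+1)).eval (-1) = 0 := by simp [eval_PP]
    rw [hz1, hz2] at hab
    have hderiv : ∀ x : ℝ, (derivative (PP (n+1))).eval x =
        (2 * (n:ℝ) + 2) * (x * (x ^ 2 - 1) ^ n) := by
      intro x
      rw [PP, derivative_pow]
      simp
      ring
    have hL : (∫ x in (-1:ℝ)..1, (PP (n+1)).eval x * (1:ℝ[X]).eval x) =
        ∫ x in (-1:ℝ)..1, ((x:ℝ) ^ 2 - 1) ^ (n+1) := by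
      apply intervalIntegral.integral_congr
      intro x _; simp [eval_PP]
    have hR : (∫ x in (-1:ℝ)..1, (derivative (PP (n+1))).eval x * (X:ℝ[X]).eval x) =
        (2 * (n:ℝ) + 2) * ∫ x in (-1:ℝ)..1, (x ^ 2) * ((x:ℝ) ^ 2 - 1) ^ n := by
      rw [← intervalIntegral.integral_const_mul]
      apply intervalIntegral.integral_congr
      intro x _
      simp only [hderiv, eval_X]
      ring
    have hsplit : (∫ x in (-1:ℝ)..1, (x ^ 2) * ((x:ℝ) ^ 2 - 1) ^ n) =
        (∫ x in (-1:ℝ)..1, ((x:ℝ) ^ 2 - 1) ^ (n+1)) + ∫ x in (-1:ℝ)..1, ((x:ℝ) ^ 2 - 1) ^ n := by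
      rw [← intervalIntegral.integral_add]
      · apply intervalIntegral.integral_congr
        intro x _
        simp only []
        ring
      · exact (Continuous.intervalIntegrable (by continuity) _ _)
      · exact (Continuous.intervalIntegrable (by continuity) _ _)
    rw [hL, hR, hsplit] at hab
    simp only [eval_X, zero_mul, sub_zero, zero_sub] at hab
    set J1 := ∫ x in (-1:ℝ)..1, ((x:ℝ) ^ 2 - 1) ^ (n+1) with hJ1
    set J0 := ∫ x in (-1:ℝ)..1, ((x:ℝ) ^ 2 - 1) ^ n with hJ0
    have hrec : (2 * (n:ℝ) + 3) * J1 = -(2 * (n:ℝ) + 2) * J0 := by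
      linear_combination hab
    have h3 : J1 = -(2 * (n:ℝ) + 2) / (2 * (n:ℝ) + 3) * J0 := by
      have hpos : (2 * (n:ℝ) + 3) ≠ 0 := by positivity
      field_simp
      linear_combination hrec
    rw [h3, ih]
    have hf1 : ((2 * (n+1) + 1).factorial : ℝ) =
        (2 * (n:ℝ) + 3) * (2 * (n:ℝ) + 2) * ((2 * n + 1).factorial : ℝ) := by
      have : 2 * (n+1) + 1 = (2*n+1) + 1 + 1 := by ring
      rw [this, Nat.factorial_succ, Nat.factorial_succ]
      push_cast
      ring
    have hf2 : ((n+1).factorial : ℝ) = ((n:ℝ) + 1) * (n.factorial : ℝ) := by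
      rw [Nat.factorial_succ]; push_cast; ring
    rw [hf1, hf2]
    have h1 : ((2*n+1).factorial : ℝ) ≠ 0 := Nat.cast_ne_zero.2 (Nat.factorial_ne_zero _)
    have h2 : (2 * (n:ℝ) + 3) ≠ 0 := by positivity
    field_simp
    ring

lemma deriv2n (n : ℕ) : derivative^[2 * n] (PP n) = C (((2 * n).factorial : ℕ) : ℝ) := by
  have hdeg : (derivative^[2*n] (PP n)).natDegree ≤ 0 := by
    have := Polynomial.natDegree_iterate_derivative (PP n) (2*n)
    rw [natDegree_PP] at this
    omega
  rw [eq_C_of_natDegree_le_zero hdeg]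
  congr 1
  rw [Polynomial.coeff_iterate_derivative]
  simp only [zero_add, Nat.descFactorial_self]
  have : (PP n).coeff (2 * n) = 1 := by
    have := (monic_PP n)
    rw [Monic, leadingCoeff, natDegree_PP] at this
    exact this
  rw [this]
  simp

/-- The Legendre polynomial `L_n` on `ℝ`, defined via the Rodrigues formula. -/
noncomputable def legendre (n : ℕ) : ℝ → ℝ :=
  fun x => (1 / ((2 : ℝ) ^ n * (n.factorial : ℝ))) *
    iteratedDeriv n (fun y => (y ^ 2 - 1) ^ n) x

lemma legendre_eq (n : ℕ) (x : ℝ) :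
    legendre n x = (1 / ((2:ℝ)^n * n.factorial)) * (derivative^[n] (PP n)).eval x := by
  unfold legendre
  congr 1
  have : (fun y : ℝ => (y^2-1)^n) = fun y => (PP n).eval y := by
    funext y; rw [eval_PP]
  rw [this, iteratedDeriv_eval]

lemma inner_eq (n m : ℕ) :
    ∫ x in (-1:ℝ)..1, legendre n x * legendre m x =
      (1 / ((2:ℝ)^n * n.factorial)) * (1 / ((2:ℝ)^m * m.factorial)) *
        ∫ x in (-1:ℝ)..1, (derivative^[n] (PP n)).eval x * (derivative^[m] (PP m)).eval x := by
  rw [← intervalIntegral.integral_const_mul]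
  apply intervalIntegral.integral_congr
  intro x _
  simp only [legendre_eq]
  ring

lemma inner_zero (n m : ℕ) (h : n < m) :
    ∫ x in (-1:ℝ)..1, (derivative^[n] (PP n)).eval x * (derivative^[m] (PP m)).eval x = 0 := by
  have hk := key n m m le_rfl
  have hz : derivative^[n + m] (PP n) = 0 :=
    iterate_derivative_eq_zero (by rw [natDegree_PP]; omega)
  rw [hz] at hk
  simp only [eval_zero, zero_mul, intervalIntegral.integral_zero] at hk
  have h1 : ((-1:ℝ)^m) ≠ 0 := pow_ne_zero _ (by norm_num)
  exact (mul_eq_zero.mp hk.symm).resolve_left h1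

lemma inner_diag (n : ℕ) :
    ∫ x in (-1:ℝ)..1, (derivative^[n] (PP n)).eval x * (derivative^[n] (PP n)).eval x =
      ((2*n).factorial : ℝ) * 2 ^ (2*n+1) * (n.factorial : ℝ)^2 / ((2*n+1).factorial : ℝ) := by
  have hk := key n n n le_rfl
  rw [show n + n = 2*n by ring, Nat.sub_self] at hk
  simp only [Function.iterate_zero, id_eq] at hk
  rw [deriv2n] at hk
  have hL : (∫ x in (-1:ℝ)..1, (C (((2*n).factorial : ℕ) : ℝ)).eval x * (PP n).eval x) =
      ((2*n).factorial : ℝ) * ∫ x in (-1:ℝ)..1, ((x:ℝ)^2 - 1)^n := by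
    rw [← intervalIntegral.integral_const_mul]
    apply intervalIntegral.integral_congr
    intro x _
    simp [eval_PP]
  rw [hL, J_val] at hk
  have hsq : (-1:ℝ)^n * (-1:ℝ)^n = 1 := by
    rw [← pow_add, ← two_mul, pow_mul]; norm_num
  set I := ∫ x in (-1:ℝ)..1, (derivative^[n] (PP n)).eval x * (derivative^[n] (PP n)).eval x
    with hI
  calc I = ((-1:ℝ)^n * (-1:ℝ)^n) * I := by rw [hsq, one_mul]
    _ = (-1:ℝ)^n * ((-1:ℝ)^n * I) := by ring
    _ = (-1:ℝ)^n * (((2*n).factorial : ℝ) *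
          ((-1:ℝ)^n * 2 ^ (2*n+1) * (n.factorial : ℝ)^2 / ((2*n+1).factorial : ℝ))) := by
        rw [← hk]
    _ = ((-1:ℝ)^n * (-1:ℝ)^n) * (((2*n).factorial : ℝ) *
          (2 ^ (2*n+1) * (n.factorial : ℝ)^2 / ((2*n+1).factorial : ℝ))) := by ring
    _ = ((2*n).factorial : ℝ) * 2 ^ (2*n+1) * (n.factorial : ℝ)^2 / ((2*n+1).factorial : ℝ) := by
        rw [hsq]; ring

/-- Orthogonality of the Legendre polynomials:
`∫_{-1}^{1} L_n L_m = 2/(2n+1)` if `n = m`, and `0` if `n ≠ m`. -/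
theorem statement8 (n m : ℕ) :
    ∫ x in (-1 : ℝ)..1, legendre n x * legendre m x =
      if n = m then 2 / (2 * (n : ℝ) + 1) else 0 := by
  rcases lt_trichotomy n m with h | h | h
  · rw [if_neg h.ne, inner_eq, inner_zero n m h, mul_zero]
  · subst h
    rw [if_pos rfl, inner_eq, inner_diag]
    have hf : ((2*n+1).factorial : ℝ) = (2*(n:ℝ)+1) * ((2*n).factorial : ℝ) := by
      rw [show 2*n+1 = (2*n)+1 from rfl, Nat.factorial_succ]; push_cast; ring
    have hp : (2:ℝ)^(2*n+1) = 2 * ((2:ℝ)^n * (2:ℝ)^n) := by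
      rw [pow_succ, two_mul, pow_add]; ring
    rw [hf, hp]
    have h1 : (n.factorial : ℝ) ≠ 0 := Nat.cast_ne_zero.2 (Nat.factorial_ne_zero _)
    have h2 : ((2:ℝ)^n) ≠ 0 := by positivity
    have h3 : (2*(n:ℝ)+1) ≠ 0 := by positivity
    have h4 : ((2*n).factorial : ℝ) ≠ 0 := Nat.cast_ne_zero.2 (Nat.factorial_ne_zero _)
    field_simp
  · rw [if_neg h.ne']
    have hsymm : (∫ x in (-1:ℝ)..1, legendre n x * legendre m x) =
        ∫ x in (-1:ℝ)..1, legendre m x * legendre n x :=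
      intervalIntegral.integral_congr (fun x _ => mul_comm _ _)
    rw [hsymm, inner_eq, inner_zero m n h, mul_zero]
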